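/- Let e^(0), e^(1), …, e^(K) ∈ ℝ^{(T+1)×n} be exchangeable random arrays, λ_{t,j} > 0 fixed weights, R^(i) = max_{t,j} λ_{t,j}|e^(i)_{t,j}| for each i, δ ∈ (0,1), and C the ⌈(K+1)(1−δ)⌉-th smallest of R^(1),…,R^(K) (or +∞ if this exceeds K). Then P( |e^(0)_{t,j}| ≤ C/λ_{t,j} for all t, j ) ≥ 1 − δ. -/

import Mathlib

open MeasureTheory
open scoped ENNReal

/-- The `p`-th smallest value among `r 0, …, r (K-1)` (p counted from 1):
the least `c` such that at least `p` of the values are `≤ c`. -/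
noncomputable def orderStat {K : ℕ} (p : ℕ) (r : Fin K → ℝ) : ℝ :=
  sInf {c : ℝ | p ≤ (Finset.univ.filter (fun i => r i ≤ c)).card}

/-- The SNSA nonconformity score: maximum weighted absolute error over all times
and state dimensions. -/
noncomputable def snsaScore {T n : ℕ} (lam : Fin (T + 1) → Fin n → ℝ)
    (e : Fin (T + 1) → Fin n → ℝ) : ℝ :=
  ⨆ t, ⨆ j, lam t j * |e t j|

open Finset in
lemma card_filter_perm {N : ℕ} (σ : Equiv.Perm (Fin N)) (q : Fin N → Prop) [DecidablePred q] :
    (univ.filter (fun i => q (σ i))).card = (univ.filter q).card := by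
  refine Finset.card_equiv σ (fun i => ?_)
  simp

open Finset in
/-- Counting lemma: for any tuple `r` of `K+1` reals and `1 ≤ p ≤ K+1`, at least `p`
indices `k` have strict rank at most `p - 1`. -/
lemma count_rank_lemma {K p : ℕ} (hp1 : 1 ≤ p) (hpK : p ≤ K + 1) (r : Fin (K + 1) → ℝ) :
    p ≤ (univ.filter (fun k => (univ.filter (fun i => r i < r k)).card ≤ p - 1)).card := by
  classical
  set σ := Tuple.sort r with hσ
  have hmono : Monotone (r ∘ σ) := Tuple.monotone_sort r
  have hinj : Function.Injective (fun j : Fin p => σ (Fin.castLE hpK j)) :=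
    fun a b hab => by
      have := σ.injective hab
      exact Fin.castLE_injective hpK this
  have hsub : (univ : Finset (Fin p)).image (fun j => σ (Fin.castLE hpK j)) ⊆
      univ.filter (fun k => (univ.filter (fun i => r i < r k)).card ≤ p - 1) := by
    intro k hk
    simp only [mem_image, mem_univ, true_and] at hk
    obtain ⟨j, rfl⟩ := hk
    simp only [mem_filter, mem_univ, true_and]
    have hcard : (univ.filter (fun i => r i < r (σ (Fin.castLE hpK j)))).card
        = (univ.filter (fun m => r (σ m) < r (σ (Fin.castLE hpK j)))).card :=
      (card_filter_perm σ _).symm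
    rw [hcard]
    have hsub2 : (univ.filter (fun m => r (σ m) < r (σ (Fin.castLE hpK j))))
        ⊆ univ.filter (fun m : Fin (K + 1) => (m : ℕ) < (j : ℕ)) := by
      intro m hm
      simp only [mem_filter, mem_univ, true_and] at hm ⊢
      by_contra hge
      push_neg at hge
      have : r (σ (Fin.castLE hpK j)) ≤ r (σ m) := hmono (by
        simpa [Fin.le_def] using hge)
      exact absurd hm (not_lt.mpr this)
    have h1 : (univ.filter (fun m : Fin (K + 1) => (m : ℕ) < (j : ℕ))).card ≤ (j : ℕ) := by
      have : (univ.filter (fun m : Fin (K + 1) => (m : ℕ) < (j : ℕ))).card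
          ≤ (Finset.range (j : ℕ)).card := by
        refine Finset.card_le_card_of_injOn (fun m => (m : ℕ)) ?_ ?_
        · intro m hm
          simp only [mem_coe, mem_filter, mem_univ, true_and] at hm
          simpa using hm
        · intro a _ b _ hab
          exact Fin.val_injective hab
      simpa using this
    have h2 : (j : ℕ) ≤ p - 1 := by omega
    exact le_trans (le_trans (card_le_card hsub2) h1) h2
  calc p = ((univ : Finset (Fin p)).image (fun j => σ (Fin.castLE hpK j))).card := by
        rw [Finset.card_image_of_injective _ hinj, Finset.card_univ, Fintype.card_fin]
    _ ≤ _ := card_le_card hsub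

open Finset in
lemma le_orderStat_of_rank {K p : ℕ} (hp1 : 1 ≤ p) (hpK : p ≤ K) (r : Fin K → ℝ) (x : ℝ)
    (h : (univ.filter (fun i => r i < x)).card ≤ p - 1) : x ≤ orderStat p r := by
  classical
  have hK : 0 < K := lt_of_lt_of_le hp1 hpK
  have hune : (univ : Finset (Fin K)).Nonempty := ⟨⟨0, hK⟩, mem_univ _⟩
  refine le_csInf ⟨univ.sup' hune r, ?_⟩ ?_
  · show p ≤ _
    have : univ.filter (fun i => r i ≤ univ.sup' hune r) = univ := by
      refine Finset.filter_true_of_mem (fun i _ => ?_)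
      exact Finset.le_sup' r (mem_univ i)
    rw [this, Finset.card_univ, Fintype.card_fin]
    exact hpK
  · intro c hc
    by_contra hlt
    push_neg at hlt
    have hsub : univ.filter (fun i => r i ≤ c) ⊆ univ.filter (fun i => r i < x) := by
      intro i hi
      simp only [mem_filter, mem_univ, true_and] at hi ⊢
      exact lt_of_le_of_lt hi hlt
    have : p ≤ p - 1 := le_trans (le_trans hc (card_le_card hsub)) h
    omega

lemma le_snsaScore {T n : ℕ} (lam : Fin (T + 1) → Fin n → ℝ)
    (e : Fin (T + 1) → Fin n → ℝ) (t : Fin (T + 1)) (j : Fin n) :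
    lam t j * |e t j| ≤ snsaScore lam e := by
  have h1 : lam t j * |e t j| ≤ ⨆ j', lam t j' * |e t j'| :=
    le_ciSup (f := fun j' => lam t j' * |e t j'|)
      (Set.Finite.bddAbove (Set.finite_range _)) j
  refine le_trans h1 ?_
  exact le_ciSup (f := fun t' => ⨆ j', lam t' j' * |e t' j'|)
    (Set.Finite.bddAbove (Set.finite_range _)) t

/-- conformal coverage with the weighted max-norm (SNSA) score. For
exchangeable error arrays `e 0, …, e K`, scores `R i = max_{t,j} λ_{t,j}|e^i_{t,j}|`,
and `C` the `⌈(K+1)(1−δ)⌉`-th smallest of `R 1, …, R K` (the event holding trivially,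
i.e. `C = +∞`, when `⌈(K+1)(1−δ)⌉ > K`), we have
`P(|e^0_{t,j}| ≤ C/λ_{t,j} for all t, j) ≥ 1 − δ`. -/
theorem stmt16 {Ω : Type*} [MeasurableSpace Ω] (μ : Measure Ω) [IsProbabilityMeasure μ]
    (K T n : ℕ) (e : Fin (K + 1) → Ω → Fin (T + 1) → Fin n → ℝ)
    (hmeas : ∀ i, Measurable (e i))
    (hexch : ∀ σ : Equiv.Perm (Fin (K + 1)),
      μ.map (fun ω i => e (σ i) ω) = μ.map (fun ω i => e i ω))
    (lam : Fin (T + 1) → Fin n → ℝ) (hlam : ∀ t j, 0 < lam t j)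
    (δ : ℝ) (hδ : δ ∈ Set.Ioo (0 : ℝ) 1)
    (p : ℕ) (hp : p = ⌈((K : ℝ) + 1) * (1 - δ)⌉₊) :
    ENNReal.ofReal (1 - δ) ≤
      μ {ω | K < p ∨ ∀ t j, |e 0 ω t j| ≤
        orderStat p (fun i : Fin K => snsaScore lam (e i.succ ω)) / lam t j} := by
  classical
  obtain ⟨hδ0, hδ1⟩ := hδ
  have hp1 : 1 ≤ p := by
    rw [hp]
    refine Nat.ceil_pos.mpr ?_
    have h1δ : (0:ℝ) < 1 - δ := by linarith
    positivity
  by_cases hKp : K < p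
  · have hset : {ω | K < p ∨ ∀ t j, |e 0 ω t j| ≤
        orderStat p (fun i : Fin K => snsaScore lam (e i.succ ω)) / lam t j} = Set.univ := by
      ext ω; simp [hKp]
    rw [hset, measure_univ]
    exact ENNReal.ofReal_le_one.mpr (by linarith)
  push_neg at hKp
  -- the scores
  set R : Fin (K + 1) → Ω → ℝ := fun i ω => snsaScore lam (e i ω) with hRdef
  have heval : ∀ (i : Fin (K + 1)) t j, Measurable (fun ω => e i ω t j) := fun i t j =>
    (measurable_pi_apply j).comp ((measurable_pi_apply t).comp (hmeas i))
  have hRmeas : ∀ i, Measurable (R i) := by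
    intro i
    refine Measurable.iSup (fun t => Measurable.iSup (fun j => ?_))
    exact measurable_const.mul (heval i t j).abs
  -- the rank event as a measurable set in the path space
  set S : Set (Fin (K + 1) → ℝ) :=
    {r | (Finset.univ.filter (fun i => r i < r 0)).card ≤ p - 1} with hSdef
  have hcnt : Measurable (fun r : Fin (K + 1) → ℝ =>
      (Finset.univ.filter (fun i => r i < r 0)).card) := by
    have hrw : (fun r : Fin (K + 1) → ℝ => (Finset.univ.filter (fun i => r i < r 0)).card)
        = fun r => ∑ i : Fin (K + 1), if r i < r 0 then 1 else 0 := by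
      ext r
      rw [Finset.card_filter]
    rw [hrw]
    refine Finset.measurable_sum _ (fun i _ => ?_)
    exact Measurable.ite (measurableSet_lt (measurable_pi_apply i) (measurable_pi_apply 0))
      measurable_const measurable_const
  have hS : MeasurableSet S := by
    have hrw : S = (fun r : Fin (K + 1) → ℝ =>
        (Finset.univ.filter (fun i => r i < r 0)).card) ⁻¹' {m | m ≤ p - 1} := rfl
    rw [hrw]
    exact hcnt (Set.to_countable _).measurableSet
  -- the events
  set E : Fin (K + 1) → Set Ω := fun k =>
    {ω | (Finset.univ.filter (fun i => R i ω < R k ω)).card ≤ p - 1} with hEdef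
  have hEeq : ∀ k, E k = (fun ω (i : Fin (K + 1)) => R (Equiv.swap 0 k i) ω) ⁻¹' S := by
    intro k
    ext ω
    simp only [hEdef, hSdef, Set.mem_setOf_eq, Set.mem_preimage]
    have h1 : (Finset.univ.filter
        (fun i => R (Equiv.swap 0 k i) ω < R (Equiv.swap 0 k 0) ω)).card
        = (Finset.univ.filter (fun i => R i ω < R k ω)).card := by
      rw [Equiv.swap_apply_left]
      exact card_filter_perm (Equiv.swap 0 k) (fun i => R i ω < R k ω)
    rw [h1]
  have hΦmeas : ∀ σ : Equiv.Perm (Fin (K + 1)),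
      Measurable (fun ω (i : Fin (K + 1)) => R (σ i) ω) := fun σ =>
    measurable_pi_lambda _ (fun i => hRmeas (σ i))
  -- transfer exchangeability to the scores
  set G : (Fin (K + 1) → Fin (T + 1) → Fin n → ℝ) → (Fin (K + 1) → ℝ) :=
    fun f i => snsaScore lam (f i) with hGdef
  have hGmeas : Measurable G := by
    refine measurable_pi_lambda _ (fun i => ?_)
    refine Measurable.iSup (fun t => Measurable.iSup (fun j => ?_))
    exact measurable_const.mul
      ((measurable_pi_apply j).comp ((measurable_pi_apply t).comp (measurable_pi_apply i))).abs
  have hemeas : ∀ σ : Equiv.Perm (Fin (K + 1)),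
      Measurable (fun ω (i : Fin (K + 1)) => e (σ i) ω) := fun σ =>
    measurable_pi_lambda _ (fun i => hmeas (σ i))
  have hid : (fun ω (i : Fin (K + 1)) => e i ω)
      = (fun ω (i : Fin (K + 1)) => e ((1 : Equiv.Perm (Fin (K + 1))) i) ω) := rfl
  have hmapR : ∀ σ : Equiv.Perm (Fin (K + 1)),
      μ.map (fun ω (i : Fin (K + 1)) => R (σ i) ω)
        = μ.map (fun ω (i : Fin (K + 1)) => R i ω) := by
    intro σ
    have h1 : (fun ω (i : Fin (K + 1)) => R (σ i) ω)
        = G ∘ (fun ω (i : Fin (K + 1)) => e (σ i) ω) := rfl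
    have h2 : (fun ω (i : Fin (K + 1)) => R i ω)
        = G ∘ (fun ω (i : Fin (K + 1)) => e i ω) := rfl
    rw [h1, h2, ← Measure.map_map hGmeas (hemeas σ), hid,
      ← Measure.map_map hGmeas (hemeas 1), hexch σ, ← hid]
  -- all events have the same measure
  have hEmeasure : ∀ k, μ (E k) = μ (E 0) := by
    intro k
    have h0 : E 0 = (fun ω (i : Fin (K + 1)) => R ((Equiv.swap 0 0) i) ω) ⁻¹' S := hEeq 0
    rw [hEeq k, h0,
      ← Measure.map_apply (hΦmeas (Equiv.swap 0 k)) hS,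
      ← Measure.map_apply (hΦmeas (Equiv.swap 0 0)) hS,
      hmapR, hmapR]
  have hEmeas : ∀ k, MeasurableSet (E k) := by
    intro k
    rw [hEeq k]
    exact hΦmeas (Equiv.swap 0 k) hS
  -- the counting bound
  have key : (p : ℝ≥0∞) ≤ ∑ k : Fin (K + 1), μ (E k) := by
    have hpt : ∀ ω, (p : ℝ≥0∞) ≤ ∑ k : Fin (K + 1), (E k).indicator (fun _ => 1) ω := by
      intro ω
      have hcount := count_rank_lemma hp1 (by omega : p ≤ K + 1) (fun i => R i ω)
      set s := Finset.univ.filter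
        (fun k => (Finset.univ.filter (fun i => R i ω < R k ω)).card ≤ p - 1) with hs
      calc (p : ℝ≥0∞) ≤ (s.card : ℝ≥0∞) := by exact_mod_cast hcount
        _ = ∑ k ∈ s, (E k).indicator (fun _ => 1) ω := by
            have h1 : ∀ k ∈ s, (E k).indicator (fun _ => (1 : ℝ≥0∞)) ω = 1 := by
              intro k hk
              have hkE : ω ∈ E k := (Finset.mem_filter.mp hk).2
              simp [Set.indicator_of_mem hkE]
            rw [Finset.sum_congr rfl h1, Finset.sum_const, nsmul_eq_mul, mul_one]
        _ ≤ ∑ k : Fin (K + 1), (E k).indicator (fun _ => 1) ω :=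
            Finset.sum_le_sum_of_subset (Finset.subset_univ s)
    calc (p : ℝ≥0∞) = ∫⁻ _, (p : ℝ≥0∞) ∂μ := by simp
      _ ≤ ∫⁻ ω, ∑ k : Fin (K + 1), (E k).indicator (fun _ => 1) ω ∂μ :=
          lintegral_mono hpt
      _ = ∑ k : Fin (K + 1), ∫⁻ ω, (E k).indicator (fun _ => 1) ω ∂μ :=
          lintegral_finset_sum _ (fun k _ => (measurable_const.indicator (hEmeas k)))
      _ = ∑ k : Fin (K + 1), μ (E k) := by
          refine Finset.sum_congr rfl (fun k _ => ?_)
          exact lintegral_indicator_one (hEmeas k)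
  have hsum : (p : ℝ≥0∞) ≤ (K + 1 : ℕ) * μ (E 0) := by
    calc (p : ℝ≥0∞) ≤ ∑ k : Fin (K + 1), μ (E k) := key
      _ = ∑ _k : Fin (K + 1), μ (E 0) := Finset.sum_congr rfl (fun k _ => hEmeasure k)
      _ = (K + 1 : ℕ) * μ (E 0) := by
          rw [Finset.sum_const, Finset.card_univ, Fintype.card_fin, nsmul_eq_mul]
  -- E 0 is contained in the target event
  have hsubset : E 0 ⊆ {ω | K < p ∨ ∀ t j, |e 0 ω t j| ≤
      orderStat p (fun i : Fin K => snsaScore lam (e i.succ ω)) / lam t j} := by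
    intro ω hω
    right
    have hω' : (Finset.univ.filter (fun i : Fin (K + 1) => R i ω < R 0 ω)).card ≤ p - 1 := hω
    have hcard : (Finset.univ.filter
        (fun i : Fin K => snsaScore lam (e i.succ ω) < R 0 ω)).card ≤ p - 1 := by
      refine le_trans ?_ hω'
      refine Finset.card_le_card_of_injOn Fin.succ ?_ ?_
      · intro i hi
        simp only [Finset.mem_coe, Finset.mem_filter, Finset.mem_univ, true_and] at hi ⊢
        exact hi
      · intro a _ b _ hab
        exact Fin.succ_injective _ hab
    have hle : R 0 ω ≤ orderStat p (fun i : Fin K => snsaScore lam (e i.succ ω)) :=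
      le_orderStat_of_rank hp1 hKp _ _ hcard
    intro t j
    rw [le_div_iff₀ (hlam t j)]
    calc |e 0 ω t j| * lam t j = lam t j * |e 0 ω t j| := mul_comm _ _
      _ ≤ R 0 ω := le_snsaScore lam (e 0 ω) t j
      _ ≤ _ := hle
  -- conclude
  have hμE : ENNReal.ofReal (1 - δ) ≤ μ (E 0) := by
    have hdiv : (p : ℝ≥0∞) / (K + 1 : ℕ) ≤ μ (E 0) := by
      rw [ENNReal.div_le_iff (by exact_mod_cast Nat.succ_ne_zero K) (by simp)]
      rwa [mul_comm]
    refine le_trans ?_ hdiv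
    have hreal : (1 - δ) ≤ (p : ℝ) / (K + 1 : ℕ) := by
      rw [le_div_iff₀ (by positivity)]
      have := Nat.le_ceil (((K : ℝ) + 1) * (1 - δ))
      rw [← hp] at this
      push_cast
      nlinarith
    calc ENNReal.ofReal (1 - δ) ≤ ENNReal.ofReal ((p : ℝ) / (K + 1 : ℕ)) :=
        ENNReal.ofReal_le_ofReal hreal
      _ = (p : ℝ≥0∞) / (K + 1 : ℕ) := by
        rw [ENNReal.ofReal_div_of_pos (by positivity), ENNReal.ofReal_natCast,
          ENNReal.ofReal_natCast]
  exact le_trans hμE (measure_mono hsubset)
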